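/- For every real c > 0, the integral I(c) := ∫_{-1/3}^{∞} exp(-c·F(T))·U'(T) dT converges absolutely, and its value satisfies Im I(c) > 0, Re I(c) > 0, and Im I(c) < √3·Re I(c); consequently the argument of I(c) lies in the open interval (0, π/3). -/

import Mathlib

/-- `F(T) = 2T²(2T+1)²√(T+1)/(3T+1)^{3/2}`. -/
noncomputable def Ffun (T : ℝ) : ℝ :=
  2 * T ^ 2 * (2 * T + 1) ^ 2 * Real.sqrt (T + 1) / (3 * T + 1) ^ ((3 : ℝ) / 2)

/-- `U(T) = T(√((T+1)/(3T+1)) + i)`. -/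
noncomputable def Ufun (T : ℝ) : ℂ :=
  (T : ℂ) * ((Real.sqrt ((T + 1) / (3 * T + 1)) : ℂ) + Complex.I)

open Real MeasureTheory Set
open scoped ENNReal

noncomputable def gfun (T : ℝ) : ℝ := Real.sqrt ((T + 1) / (3 * T + 1))

noncomputable def psiF (T : ℝ) : ℝ :=
  (3 * T ^ 2 + 3 * T + 1) / ((3 * T + 1) ^ 2 * gfun T)

noncomputable def EF (c T : ℝ) : ℝ := Real.exp (-(c * Ffun T))

noncomputable def f0 (c T : ℝ) : ℂ :=
  ((EF c T : ℝ) : ℂ) * (((psiF T : ℝ) : ℂ) + Complex.I)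

lemma g_pos {T : ℝ} (hT : -(1:ℝ)/3 < T) : 0 < gfun T := by
  have hs : 0 < 3 * T + 1 := by linarith
  have ht : 0 < T + 1 := by linarith
  exact Real.sqrt_pos.2 (div_pos ht hs)

lemma g_sq {T : ℝ} (hT : -(1:ℝ)/3 < T) : gfun T ^ 2 = (T + 1) / (3 * T + 1) := by
  have hs : 0 < 3 * T + 1 := by linarith
  have ht : 0 < T + 1 := by linarith
  exact Real.sq_sqrt (le_of_lt (div_pos ht hs))

lemma psi_nonneg (T : ℝ) : 0 ≤ psiF T := by
  have hA : (0:ℝ) ≤ 3 * T ^ 2 + 3 * T + 1 := by nlinarith [sq_nonneg (2*T+1)]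
  exact div_nonneg hA (mul_nonneg (sq_nonneg _) (Real.sqrt_nonneg _))

lemma psi_pos {T : ℝ} (hT : -(1:ℝ)/3 < T) : 0 < psiF T := by
  have hs : 0 < 3 * T + 1 := by linarith
  have hA : (0:ℝ) < 3 * T ^ 2 + 3 * T + 1 := by nlinarith [sq_nonneg (2*T+1)]
  exact div_pos hA (mul_pos (pow_pos hs 2) (g_pos hT))

/-- `√3 ψ(T) > 1` for `T > -1/3`. -/
lemma psi_gt {T : ℝ} (hT : -(1:ℝ)/3 < T) : 1 < Real.sqrt 3 * psiF T := by
  have hs : 0 < 3 * T + 1 := by linarith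
  have hg := g_pos hT
  have hgsq := g_sq hT
  have hA : (0:ℝ) < 3 * T ^ 2 + 3 * T + 1 := by nlinarith [sq_nonneg (2*T+1)]
  have hden : 0 < (3 * T + 1) ^ 2 * gfun T := mul_pos (pow_pos hs 2) hg
  rw [psiF, mul_div_assoc', one_lt_div hden]
  have h3 : (0:ℝ) ≤ Real.sqrt 3 * (3 * T ^ 2 + 3 * T + 1) := by positivity
  refine lt_of_pow_lt_pow_left₀ 2 h3 ?_
  have e1 : ((3 * T + 1) ^ 2 * gfun T) ^ 2 = (3 * T + 1) ^ 3 * (T + 1) := by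
    rw [mul_pow, hgsq]
    field_simp
  have e2 : (Real.sqrt 3 * (3 * T ^ 2 + 3 * T + 1)) ^ 2
      = 3 * (3 * T ^ 2 + 3 * T + 1) ^ 2 := by
    rw [mul_pow, Real.sq_sqrt (by norm_num : (0:ℝ) ≤ 3)]
  rw [e1, e2]
  nlinarith [sq_nonneg (3 * T + 4/3), sq_nonneg T]

/-- derivative of `Ufun` on `T > -1/3`. -/
lemma hasDerivAt_U {T : ℝ} (hT : -(1:ℝ)/3 < T) :
    HasDerivAt Ufun (((psiF T : ℝ) : ℂ) + Complex.I) T := by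
  have hs : 0 < 3 * T + 1 := by linarith
  have ht : 0 < T + 1 := by linarith
  have hg := g_pos hT
  have hgsq : gfun T ^ 2 * (3 * T + 1) = T + 1 := by
    rw [g_sq hT, div_mul_cancel₀ _ hs.ne']
  have h1 : HasDerivAt (fun T : ℝ => T + 1) 1 T := (hasDerivAt_id T).add_const 1
  have h2 : HasDerivAt (fun T : ℝ => 3 * T + 1) 3 T := by
    simpa using ((hasDerivAt_id T).const_mul 3).add_const 1
  have hq : HasDerivAt (fun T : ℝ => (T + 1) / (3 * T + 1))
      ((1 * (3 * T + 1) - (T + 1) * 3) / (3 * T + 1) ^ 2) T := h1.div h2 hs.ne'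
  have hq0 : (T + 1) / (3 * T + 1) ≠ 0 := (div_pos ht hs).ne'
  have hgd : HasDerivAt gfun
      ((1 * (3 * T + 1) - (T + 1) * 3) / (3 * T + 1) ^ 2
        / (2 * Real.sqrt ((T + 1) / (3 * T + 1)))) T := hq.sqrt hq0
  have hid : HasDerivAt (fun t : ℝ => (t : ℂ)) 1 T := by
    simpa using (hasDerivAt_id T).ofReal_comp
  have hgc : HasDerivAt (fun t : ℝ => ((gfun t : ℝ) : ℂ) + Complex.I)
      (((((1 * (3 * T + 1) - (T + 1) * 3) / (3 * T + 1) ^ 2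
        / (2 * Real.sqrt ((T + 1) / (3 * T + 1)))) : ℝ) : ℂ)) T :=
    (hgd.ofReal_comp).add_const Complex.I
  have hU := hid.mul hgc
  have hUf : Ufun = fun t : ℝ => (t : ℂ) * (((gfun t : ℝ) : ℂ) + Complex.I) := rfl
  rw [hUf]
  convert hU using 1
  · rfl
  · rfl
  have hkey : psiF T = gfun T +
      T * ((1 * (3 * T + 1) - (T + 1) * 3) / (3 * T + 1) ^ 2
        / (2 * Real.sqrt ((T + 1) / (3 * T + 1)))) := by
    have hgfun : Real.sqrt ((T + 1) / (3 * T + 1)) = gfun T := rfl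
    rw [hgfun, psiF]
    field_simp
    linear_combination (-2*(3*T+1)) * hgsq
  rw [hkey]
  push_cast
  ring

lemma deriv_U {T : ℝ} (hT : -(1:ℝ)/3 < T) :
    deriv Ufun T = ((psiF T : ℝ) : ℂ) + Complex.I :=
  (hasDerivAt_U hT).deriv

lemma Ffun_nonneg {T : ℝ} (hT : -(1:ℝ)/3 < T) : 0 ≤ Ffun T := by
  have hs : 0 < 3 * T + 1 := by linarith
  have h : (0:ℝ) < (3 * T + 1) ^ ((3:ℝ)/2) := Real.rpow_pos_of_pos hs _
  rw [Ffun]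
  positivity

lemma EF_le_one {c T : ℝ} (hc : 0 < c) (hT : -(1:ℝ)/3 < T) : EF c T ≤ 1 := by
  rw [EF, Real.exp_le_one_iff]
  have := Ffun_nonneg hT
  nlinarith

lemma EF_pos (c T : ℝ) : 0 < EF c T := Real.exp_pos _

lemma norm_f0_le (c T : ℝ) : ‖f0 c T‖ ≤ EF c T * (psiF T + 1) := by
  rw [f0, norm_mul]
  have h1 : ‖((EF c T : ℝ) : ℂ)‖ = EF c T := by
    rw [Complex.norm_real, Real.norm_eq_abs, abs_of_pos (EF_pos c T)]
  rw [h1]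
  have h2 : ‖(((psiF T : ℝ) : ℂ)) + Complex.I‖ ≤ psiF T + 1 := by
    refine (norm_add_le _ _).trans ?_
    rw [Complex.norm_real, Complex.norm_I, Real.norm_eq_abs, abs_of_nonneg (psi_nonneg T)]
  exact mul_le_mul_of_nonneg_left h2 (EF_pos c T).le

lemma rpow_three_halves {s : ℝ} (hs : 0 < s) :
    s ^ ((3:ℝ)/2) = s ^ 2 / Real.sqrt s := by
  rw [Real.sqrt_eq_rpow, eq_div_iff (by positivity : (s ^ ((1:ℝ)/2)) ≠ 0),
    ← Real.rpow_natCast s 2, ← Real.rpow_add hs]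
  norm_num

lemma measurable_f0 (c : ℝ) : Measurable (f0 c) := by
  unfold f0 EF psiF gfun Ffun
  fun_prop

/-- Lower bound for `Ffun` on `(-1/3, -1/6]`. -/
lemma Ffun_left {T : ℝ} (h1 : -(1:ℝ)/3 < T) (h2 : T ≤ -(1:ℝ)/6) :
    (1/250) / (3 * T + 1) ^ ((3:ℝ)/2) ≤ Ffun T := by
  have hs : 0 < 3 * T + 1 := by linarith
  have hp : 0 < (3 * T + 1) ^ ((3:ℝ)/2) := Real.rpow_pos_of_pos hs _
  rw [Ffun, div_le_div_iff₀ hp hp]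
  have hsr : (4:ℝ)/5 ≤ Real.sqrt (T + 1) := by
    rw [show (4:ℝ)/5 = Real.sqrt ((4/5)^2) by rw [Real.sqrt_sq]; norm_num]
    exact Real.sqrt_le_sqrt (by nlinarith)
  have hnum : (1:ℝ)/250 ≤ 2 * T ^ 2 * (2 * T + 1) ^ 2 * Real.sqrt (T + 1) := by
    have hT2 : (1:ℝ)/36 ≤ T ^ 2 := by nlinarith
    have h2T : (1:ℝ)/9 ≤ (2 * T + 1) ^ 2 := by nlinarith
    have hc1 : (1:ℝ)/324 ≤ T ^ 2 * (2 * T + 1) ^ 2 := by nlinarith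
    have hc2 : (1/324 : ℝ) * (4/5) ≤ (T ^ 2 * (2 * T + 1) ^ 2) * Real.sqrt (T + 1) :=
      mul_le_mul hc1 hsr (by norm_num) (by positivity)
    nlinarith
  exact mul_le_mul_of_nonneg_right hnum hp.le

/-- Upper bound for `psiF` on `(-1/3, -1/6]`. -/
lemma psi_left {T : ℝ} (h1 : -(1:ℝ)/3 < T) (h2 : T ≤ -(1:ℝ)/6) :
    psiF T ≤ 2 / (3 * T + 1) ^ ((3:ℝ)/2) := by
  have hs : 0 < 3 * T + 1 := by linarith
  have hg := g_pos h1
  have hp : 0 < (3 * T + 1) ^ ((3:ℝ)/2) := Real.rpow_pos_of_pos hs _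
  have hA1 : 3 * T ^ 2 + 3 * T + 1 ≤ 1 := by nlinarith
  have hA0 : (0:ℝ) < 3 * T ^ 2 + 3 * T + 1 := by nlinarith [sq_nonneg (2*T+1)]
  have hsrT : (4:ℝ)/5 ≤ Real.sqrt (T + 1) := by
    rw [show (4:ℝ)/5 = Real.sqrt ((4/5)^2) by rw [Real.sqrt_sq]; norm_num]
    exact Real.sqrt_le_sqrt (by nlinarith)
  have hgeq : gfun T = Real.sqrt (T + 1) / Real.sqrt (3 * T + 1) := by
    rw [gfun, Real.sqrt_div (by linarith : (0:ℝ) ≤ T + 1)]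
  have hps : (3 * T + 1) ^ 2 * gfun T = (3 * T + 1) ^ ((3:ℝ)/2) * Real.sqrt (T + 1) := by
    rw [hgeq, rpow_three_halves hs]
    have hss : Real.sqrt (3 * T + 1) ≠ 0 := (Real.sqrt_pos.2 hs).ne'
    field_simp
  rw [psiF, hps]
  have hbig : (4/5 : ℝ) * ((3 * T + 1) ^ ((3:ℝ)/2)) ≤ (3 * T + 1) ^ ((3:ℝ)/2) * Real.sqrt (T + 1) := by
    nlinarith
  calc (3 * T ^ 2 + 3 * T + 1) / ((3 * T + 1) ^ ((3:ℝ)/2) * Real.sqrt (T + 1))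
      ≤ 1 / ((4/5 : ℝ) * ((3 * T + 1) ^ ((3:ℝ)/2))) :=
        div_le_div₀ (by norm_num) hA1 (by positivity) hbig
    _ ≤ 2 / (3 * T + 1) ^ ((3:ℝ)/2) := by
        rw [div_le_div_iff₀ (by positivity) hp]
        nlinarith

lemma bound_left {c T : ℝ} (hc : 0 < c) (h1 : -(1:ℝ)/3 < T) (h2 : T ≤ -(1:ℝ)/6) :
    ‖f0 c T‖ ≤ 500 / c + 1 := by
  refine (norm_f0_le c T).trans ?_
  have hE1 := EF_le_one hc h1
  have hs : 0 < 3 * T + 1 := by linarith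
  set p := (3 * T + 1) ^ ((3:ℝ)/2) with hpdef
  have hp : 0 < p := Real.rpow_pos_of_pos hs _
  have key : EF c T * psiF T ≤ 500 / c := by
    have hFl := Ffun_left h1 h2
    have hexp : EF c T ≤ 250 * p / c := by
      have hle : c / 250 / p ≤ c * Ffun T := by
        have := mul_le_mul_of_nonneg_left hFl hc.le
        calc c / 250 / p = c * ((1/250) / p) := by ring
          _ ≤ c * Ffun T := this
      have h3 : EF c T ≤ Real.exp (-(c / 250 / p)) := by
        rw [EF, Real.exp_le_exp]; linarith
      refine h3.trans ?_
      rw [Real.exp_neg]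
      have h4 : c / (250 * p) ≤ Real.exp (c / 250 / p) := by
        have := Real.add_one_le_exp (c / 250 / p)
        have : c / 250 / p ≤ Real.exp (c / 250 / p) := by linarith
        calc c / (250 * p) = c / 250 / p := by rw [div_div]
          _ ≤ _ := this
      calc (Real.exp (c / 250 / p))⁻¹ ≤ (c / (250 * p))⁻¹ := by
            apply inv_anti₀ (by positivity) h4
        _ = 250 * p / c := by rw [inv_div]
    have hpsil := psi_left h1 h2
    calc EF c T * psiF T ≤ (250 * p / c) * (2 / p) :=
          mul_le_mul hexp hpsil (psi_nonneg T) (by positivity)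
      _ = 500 / c := by field_simp; ring
  nlinarith [EF_pos c T, psi_nonneg T]

lemma bound_mid {c T : ℝ} (hc : 0 < c) (h1 : -(1:ℝ)/6 < T) (h2 : T ≤ 1) :
    ‖f0 c T‖ ≤ 71 := by
  have h1' : -(1:ℝ)/3 < T := by linarith
  refine (norm_f0_le c T).trans ?_
  have hE1 := EF_le_one hc h1'
  have hs : (1:ℝ)/2 ≤ 3 * T + 1 := by linarith
  have hglb : (2:ℝ)/5 ≤ gfun T := by
    rw [gfun, show (2:ℝ)/5 = Real.sqrt ((2/5)^2) by rw [Real.sqrt_sq]; norm_num]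
    apply Real.sqrt_le_sqrt
    rw [le_div_iff₀ (by linarith)]
    nlinarith
  have hA7 : 3 * T ^ 2 + 3 * T + 1 ≤ 7 := by nlinarith
  have hpsile : psiF T ≤ 70 := by
    rw [psiF, div_le_iff₀ (mul_pos (by nlinarith) (g_pos h1'))]
    have hden : (1:ℝ)/10 ≤ (3 * T + 1) ^ 2 * gfun T := by
      have := mul_le_mul (by nlinarith : (1:ℝ)/4 ≤ (3*T+1)^2) hglb (by norm_num)
        (by nlinarith : (0:ℝ) ≤ (3*T+1)^2)
      nlinarith
    nlinarith
  nlinarith [EF_pos c T, psi_nonneg T]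

lemma Ffun_right {T : ℝ} (h1 : 1 ≤ T) : T / 2 ≤ Ffun T := by
  have hs : (1:ℝ) ≤ 3 * T + 1 := by linarith
  have hs0 : (0:ℝ) < 3 * T + 1 := by linarith
  have hp : 0 < (3 * T + 1) ^ ((3:ℝ)/2) := Real.rpow_pos_of_pos hs0 _
  have hple : (3 * T + 1) ^ ((3:ℝ)/2) ≤ (3 * T + 1) ^ 2 := by
    calc (3 * T + 1) ^ ((3:ℝ)/2) ≤ (3 * T + 1) ^ ((2:ℕ):ℝ) :=
          Real.rpow_le_rpow_of_exponent_le hs (by norm_num)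
      _ = (3 * T + 1) ^ 2 := Real.rpow_natCast _ 2
  have hsr1 : (1:ℝ) ≤ Real.sqrt (T + 1) := by
    have h := Real.sqrt_le_sqrt (show (1:ℝ) ≤ T + 1 by linarith)
    rwa [Real.sqrt_one] at h
  have hN : (0:ℝ) ≤ 2 * T ^ 2 * (2 * T + 1) ^ 2 * Real.sqrt (T + 1) := by positivity
  rw [Ffun]
  have hmid : 2 * T ^ 2 * (2 * T + 1) ^ 2 * Real.sqrt (T + 1) / (3 * T + 1) ^ 2
      ≤ 2 * T ^ 2 * (2 * T + 1) ^ 2 * Real.sqrt (T + 1) / (3 * T + 1) ^ ((3:ℝ)/2) :=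
    div_le_div_of_nonneg_left hN hp hple
  refine le_trans ?_ hmid
  rw [le_div_iff₀ (by positivity)]
  have hNge : 2 * T ^ 2 * (2 * T + 1) ^ 2 * 1 ≤ 2 * T ^ 2 * (2 * T + 1) ^ 2 * Real.sqrt (T + 1) :=
    mul_le_mul_of_nonneg_left hsr1 (by positivity)
  nlinarith

lemma psi_right {T : ℝ} (h1 : 1 ≤ T) : psiF T ≤ 2 := by
  have h1' : -(1:ℝ)/3 < T := by linarith
  have hs0 : (0:ℝ) < 3 * T + 1 := by linarith
  have hg12 : (1:ℝ)/2 ≤ gfun T := by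
    rw [gfun, show (1:ℝ)/2 = Real.sqrt ((1/2)^2) by rw [Real.sqrt_sq]; norm_num]
    apply Real.sqrt_le_sqrt
    rw [le_div_iff₀ hs0]
    nlinarith
  rw [psiF, div_le_iff₀ (mul_pos (by positivity) (g_pos h1'))]
  have hden : (9 * T ^ 2) * (1/2) ≤ (3 * T + 1) ^ 2 * gfun T :=
    mul_le_mul (by nlinarith) hg12 (by norm_num) (by positivity)
  nlinarith

lemma bound_right {c T : ℝ} (hc : 0 < c) (h1 : 1 < T) :
    ‖f0 c T‖ ≤ 3 * Real.exp (-(c/2) * T) := by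
  refine (norm_f0_le c T).trans ?_
  have hEle : EF c T ≤ Real.exp (-(c/2) * T) := by
    rw [EF, Real.exp_le_exp]
    have := Ffun_right h1.le
    nlinarith
  have hps := psi_right h1.le
  calc EF c T * (psiF T + 1) ≤ Real.exp (-(c/2) * T) * 3 :=
        mul_le_mul hEle (by linarith) (by linarith [psi_nonneg T]) (Real.exp_pos _).le
    _ = 3 * Real.exp (-(c/2) * T) := by ring

lemma int_f0 {c : ℝ} (hc : 0 < c) : IntegrableOn (f0 c) (Ioi (-(1:ℝ)/3)) := by
  have hsplit : Ioi (-(1:ℝ)/3) = Ioc (-(1:ℝ)/3) (-(1:ℝ)/6) ∪ (Ioc (-(1:ℝ)/6) 1 ∪ Ioi (1:ℝ)) := by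
    rw [Ioc_union_Ioi_eq_Ioi (by norm_num : -(1:ℝ)/6 ≤ 1),
      Ioc_union_Ioi_eq_Ioi (by norm_num : -(1:ℝ)/3 ≤ -(1:ℝ)/6)]
  rw [hsplit]
  refine IntegrableOn.union ?_ (IntegrableOn.union ?_ ?_)
  · have hg : IntegrableOn (fun _ : ℝ => (500/c + 1 : ℝ)) (Ioc (-(1:ℝ)/3) (-(1:ℝ)/6)) volume :=
      integrableOn_const measure_Ioc_lt_top.ne
    refine Integrable.mono' hg ((measurable_f0 c).aestronglyMeasurable) ?_
    rw [ae_restrict_iff' measurableSet_Ioc]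
    filter_upwards with T hT
    exact bound_left hc hT.1 hT.2
  · have hg : IntegrableOn (fun _ : ℝ => (71 : ℝ)) (Ioc (-(1:ℝ)/6) 1) volume :=
      integrableOn_const measure_Ioc_lt_top.ne
    refine Integrable.mono' hg ((measurable_f0 c).aestronglyMeasurable) ?_
    rw [ae_restrict_iff' measurableSet_Ioc]
    filter_upwards with T hT
    exact bound_mid hc hT.1 hT.2
  · have hg : IntegrableOn (fun x : ℝ => 3 * Real.exp (-(c/2) * x)) (Ioi (1:ℝ)) volume :=
      (exp_neg_integrableOn_Ioi 1 (by positivity : (0:ℝ) < c/2)).const_mul 3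
    refine Integrable.mono' hg ((measurable_f0 c).aestronglyMeasurable) ?_
    rw [ae_restrict_iff' measurableSet_Ioi]
    filter_upwards with T hT
    exact bound_right hc hT

/-- For `c > 0`, `I(c) = ∫_{-1/3}^∞ e^{-c F(T)} U'(T) dT` converges absolutely, and
`Im I(c) > 0`, `Re I(c) > 0`, `Im I(c) < √3 Re I(c)`, so `arg I(c) ∈ (0, π/3)`. -/
theorem steepest_descent_integral_argument (c : ℝ) (hc : 0 < c) :
    MeasureTheory.IntegrableOn
      (fun T : ℝ => Complex.exp (((-(c * Ffun T) : ℝ) : ℂ)) * deriv Ufun T)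
      (Set.Ioi (-(1 : ℝ) / 3)) ∧
    ∀ I : ℂ,
      I = (∫ T in Set.Ioi (-(1 : ℝ) / 3),
        Complex.exp (((-(c * Ffun T) : ℝ) : ℂ)) * deriv Ufun T) →
      0 < I.im ∧ 0 < I.re ∧ I.im < Real.sqrt 3 * I.re ∧
        Complex.arg I ∈ Set.Ioo 0 (Real.pi / 3) := by
  have heq : EqOn (f0 c)
      (fun T : ℝ => Complex.exp (((-(c * Ffun T) : ℝ) : ℂ)) * deriv Ufun T)
      (Ioi (-(1:ℝ)/3)) := by
    intro T hT
    rw [mem_Ioi] at hT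
    simp only [f0, EF, Complex.ofReal_exp, deriv_U hT]
  have hf0int := int_f0 hc
  have hint := hf0int.congr_fun heq measurableSet_Ioi
  refine ⟨hint, ?_⟩
  intro I hI
  have hI0 : I = ∫ T in Ioi (-(1:ℝ)/3), f0 c T := by
    rw [hI, setIntegral_congr_fun measurableSet_Ioi heq]
  have him_eq : ∀ T, (f0 c T).im = EF c T := fun T => by simp [f0]
  have hre_eq : ∀ T, (f0 c T).re = EF c T * psiF T := fun T => by simp [f0]
  have him_int : IntegrableOn (fun T => EF c T) (Ioi (-(1:ℝ)/3)) := by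
    have := hf0int.im
    simpa [him_eq, IntegrableOn] using this
  have hre_int : IntegrableOn (fun T => EF c T * psiF T) (Ioi (-(1:ℝ)/3)) := by
    have := hf0int.re
    simpa [hre_eq, IntegrableOn] using this
  have hIm : I.im = ∫ T in Ioi (-(1:ℝ)/3), EF c T := by
    rw [hI0]
    have h := ContinuousLinearMap.integral_comp_comm Complex.imCLM hf0int
    simp only [Complex.imCLM_apply, him_eq] at h
    exact h.symm
  have hRe : I.re = ∫ T in Ioi (-(1:ℝ)/3), EF c T * psiF T := by
    rw [hI0]
    have h := ContinuousLinearMap.integral_comp_comm Complex.reCLM hf0int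
    simp only [Complex.reCLM_apply, hre_eq] at h
    exact h.symm
  have hsupp : ∀ {h : ℝ → ℝ}, (∀ T ∈ Ioi (-(1:ℝ)/3), h T ≠ 0) →
      (0:ℝ≥0∞) < volume (Function.support h ∩ Ioi (-(1:ℝ)/3)) := by
    intro h hne
    have hsub : Ioi (-(1:ℝ)/3) ⊆ Function.support h ∩ Ioi (-(1:ℝ)/3) :=
      fun T hT => ⟨hne T hT, hT⟩
    refine lt_of_lt_of_le ?_ (measure_mono hsub)
    simp [Real.volume_Ioi]
  have him_pos : 0 < I.im := by
    rw [hIm]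
    rw [setIntegral_pos_iff_support_of_nonneg_ae
      (ae_of_all _ fun T => (EF_pos c T).le) him_int]
    exact hsupp fun T _ => (EF_pos c T).ne'
  have hre_pos : 0 < I.re := by
    rw [hRe]
    rw [setIntegral_pos_iff_support_of_nonneg_ae
      (ae_of_all _ fun T => mul_nonneg (EF_pos c T).le (psi_nonneg T)) hre_int]
    exact hsupp fun T hT => (mul_pos (EF_pos c T) (psi_pos hT)).ne'
  have hdiff_int : IntegrableOn (fun T => EF c T * (Real.sqrt 3 * psiF T - 1))
      (Ioi (-(1:ℝ)/3)) := by
    have heq2 : (fun T => EF c T * (Real.sqrt 3 * psiF T - 1))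
        = fun T => Real.sqrt 3 * (EF c T * psiF T) - EF c T := funext fun T => by ring
    rw [heq2]
    exact (hre_int.const_mul _).sub him_int
  have hdiff_pos : 0 < ∫ T in Ioi (-(1:ℝ)/3), EF c T * (Real.sqrt 3 * psiF T - 1) := by
    have hnn : 0 ≤ᵐ[volume.restrict (Ioi (-(1:ℝ)/3))]
        fun T => EF c T * (Real.sqrt 3 * psiF T - 1) := by
      filter_upwards [ae_restrict_mem measurableSet_Ioi] with T hT
      rw [mem_Ioi] at hT
      exact (mul_pos (EF_pos c T) (by linarith [psi_gt hT])).le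
    rw [setIntegral_pos_iff_support_of_nonneg_ae hnn hdiff_int]
    refine hsupp fun T hT => ?_
    rw [mem_Ioi] at hT
    exact (mul_pos (EF_pos c T) (by linarith [psi_gt hT])).ne'
  have hlt : I.im < Real.sqrt 3 * I.re := by
    have hval : (∫ T in Ioi (-(1:ℝ)/3), EF c T * (Real.sqrt 3 * psiF T - 1))
        = Real.sqrt 3 * I.re - I.im := by
      have heq2 : (fun T => EF c T * (Real.sqrt 3 * psiF T - 1))
          = fun T => Real.sqrt 3 * (EF c T * psiF T) - EF c T := funext fun T => by ring
      rw [heq2, integral_sub (hre_int.const_mul _) him_int, integral_const_mul, hIm, hRe]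
    rw [hval] at hdiff_pos
    linarith
  refine ⟨him_pos, hre_pos, hlt, ?_⟩
  have hne : I ≠ 0 := fun h => by rw [h] at hre_pos; simp at hre_pos
  have habs : 0 < ‖I‖ := norm_pos_iff.mpr hne
  rw [Complex.arg_of_re_nonneg hre_pos.le]
  constructor
  · exact Real.arcsin_pos.2 (div_pos him_pos habs)
  · have hsqrt3 : Real.sqrt 3 ≤ 2 := by
      nlinarith [Real.sq_sqrt (by norm_num : (0:ℝ) ≤ 3), Real.sqrt_nonneg 3]
    have hd1 : I.im / ‖I‖ < Real.sqrt 3 / 2 := by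
      rw [div_lt_div_iff₀ habs (by norm_num)]
      have h0 : (0:ℝ) ≤ Real.sqrt 3 * ‖I‖ := by positivity
      refine lt_of_pow_lt_pow_left₀ 2 h0 ?_
      have habs2 : ‖I‖ ^ 2 = I.re ^ 2 + I.im ^ 2 := by
        rw [Complex.sq_norm, Complex.normSq_apply]; ring
      have hsq3 : Real.sqrt 3 ^ 2 = 3 := Real.sq_sqrt (by norm_num)
      have him2 : I.im ^ 2 < 3 * I.re ^ 2 := by
        nlinarith [him_pos, hre_pos, hlt, hsq3]
      calc (I.im * 2) ^ 2 = 4 * I.im ^ 2 := by ring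
        _ < 3 * (I.re ^ 2 + I.im ^ 2) := by nlinarith
        _ = (Real.sqrt 3 * ‖I‖) ^ 2 := by rw [mul_pow, hsq3, habs2]
    have hmem1 : I.im / ‖I‖ ∈ Icc (-1:ℝ) 1 := by
      constructor
      · have : (0:ℝ) ≤ I.im / ‖I‖ := div_nonneg him_pos.le habs.le
        linarith
      · rw [div_le_one habs]
        exact le_trans (le_abs_self _) (Complex.abs_im_le_norm I)
    have hmem2 : Real.sqrt 3 / 2 ∈ Icc (-1:ℝ) 1 := by
      constructor
      · have := Real.sqrt_nonneg 3; linarith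
      · linarith
    have := Real.strictMonoOn_arcsin hmem1 hmem2 hd1
    have harc : Real.arcsin (Real.sqrt 3 / 2) = Real.pi / 3 := by
      rw [show Real.sqrt 3 / 2 = Real.sin (Real.pi / 3) by rw [Real.sin_pi_div_three]]
      exact Real.arcsin_sin (by linarith [Real.pi_pos]) (by linarith [Real.pi_pos])
    rw [harc] at this
    exact this
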